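/- For 0 < q < 1, the Marčenko–Pastur density integrates to 1 over its support [λ_−, λ_+]: ∫_{λ_−}^{λ_+} √((λ_+ − λ)(λ − λ_−))/(2πqλ) dλ = 1. -/

import Mathlib

open Real Set intervalIntegral

lemma mp_key (a b : ℝ) (ha : 0 < a) (hab : a < b) :
    ∫ x in a..b, Real.sqrt ((b - x) * (x - a)) / x
      = Real.pi * ((a + b) / 2 - Real.sqrt (a * b)) := by
  have hb : 0 < b := ha.trans hab
  have hba : 0 < b - a := by linarith
  set T := Real.sqrt (a * b) with hTdef
  have hT0 : 0 < T := Real.sqrt_pos.mpr (mul_pos ha hb)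
  have hT2 : T ^ 2 = a * b := Real.sq_sqrt (mul_pos ha hb).le
  set F : ℝ → ℝ := fun x =>
    Real.sqrt ((b - x) * (x - a))
      + (a + b) / 2 * Real.arcsin ((2 * x - a - b) / (b - a))
      - T * Real.arcsin (((a + b) * x - 2 * (a * b)) / ((b - a) * x))
    with hF
  have hcontF : ContinuousOn F (Icc a b) := by
    apply ContinuousOn.sub
    · apply ContinuousOn.add
      · exact (Real.continuous_sqrt.comp (by continuity)).continuousOn
      · exact (continuous_const.mul (Real.continuous_arcsin.comp (by continuity))).continuousOn
    · apply continuousOn_const.mul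
      apply Real.continuous_arcsin.comp_continuousOn
      apply ContinuousOn.div (by fun_prop) (by fun_prop)
      intro x hx
      have hx0 : 0 < x := lt_of_lt_of_le ha hx.1
      positivity
  have hderiv : ∀ x ∈ Ioo a b, HasDerivAt F (Real.sqrt ((b - x) * (x - a)) / x) x := by
    intro x hx
    obtain ⟨hx1, hx2⟩ := hx
    have hx0 : 0 < x := ha.trans hx1
    have hg : 0 < (b - x) * (x - a) := mul_pos (by linarith) (by linarith)
    set S := Real.sqrt ((b - x) * (x - a)) with hSdef
    have hS0 : 0 < S := Real.sqrt_pos.mpr hg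
    have hS2 : S ^ 2 = (b - x) * (x - a) := Real.sq_sqrt hg.le
    -- piece 1 : sqrt part
    have h1 : HasDerivAt (fun y => Real.sqrt ((b - y) * (y - a)))
        ((a + b - 2 * x) / (2 * S)) x := by
      have hinner : HasDerivAt (fun y => (b - y) * (y - a)) (a + b - 2 * x) x := by
        have h := ((hasDerivAt_id x).const_sub b).mul ((hasDerivAt_id x).sub_const a)
        refine h.congr_deriv (Eq.symm ?_)
        simp only [id_eq, mul_one, one_mul]
        try ring
      have := (Real.hasDerivAt_sqrt hg.ne').comp x hinner
      refine this.congr_deriv (Eq.symm ?_)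
      rw [← hSdef]
      field_simp
    -- piece 2 : first arcsin
    have h2 : HasDerivAt (fun y => Real.arcsin ((2 * y - a - b) / (b - a)))
        (1 / S) x := by
      have hinner : HasDerivAt (fun y => (2 * y - a - b) / (b - a)) (2 / (b - a)) x := by
        have h := ((((hasDerivAt_id x).const_mul 2).sub_const a).sub_const b).div_const (b - a)
        refine h.congr_deriv (Eq.symm ?_)
        simp only [id_eq, mul_one, one_mul]
        try ring
      set u := (2 * x - a - b) / (b - a) with hu
      have hsq : 1 - u ^ 2 = (2 * S / (b - a)) ^ 2 := by
        rw [hu]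
        field_simp
        linear_combination (-4 : ℝ) * hS2
      have hupos : 1 - u ^ 2 > 0 := by
        rw [hsq]; positivity
      have hune1 : u ≠ 1 := by intro h; rw [h] at hupos; norm_num at hupos
      have hune1' : u ≠ -1 := by intro h; rw [h] at hupos; norm_num at hupos
      have := (Real.hasDerivAt_arcsin hune1' hune1).comp x hinner
      refine this.congr_deriv (Eq.symm ?_)
      rw [hsq, Real.sqrt_sq (by positivity)]
      field_simp
    -- piece 3 : second arcsin
    have h3 : HasDerivAt (fun y => Real.arcsin (((a + b) * y - 2 * (a * b)) / ((b - a) * y)))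
        (T / (x * S)) x := by
      have hn : HasDerivAt (fun y : ℝ => (a + b) * y - 2 * (a * b)) (a + b) x := by
        have h := ((hasDerivAt_id x).const_mul (a + b)).sub_const (2 * (a * b))
        refine h.congr_deriv (Eq.symm ?_)
        simp only [id_eq, mul_one, one_mul]
        try ring
      have hd : HasDerivAt (fun y : ℝ => (b - a) * y) (b - a) x := by
        have h := (hasDerivAt_id x).const_mul (b - a)
        refine h.congr_deriv (Eq.symm ?_)
        simp only [id_eq, mul_one, one_mul]
        try ring
      have hdne : (b - a) * x ≠ 0 := by positivity
      have hinner := hn.div hd hdne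
      set k := ((a + b) * x - 2 * (a * b)) / ((b - a) * x) with hk
      have hsq : 1 - k ^ 2 = (2 * T * S / ((b - a) * x)) ^ 2 := by
        rw [hk]
        field_simp
        linear_combination (-4 * S ^ 2 : ℝ) * hT2 + (-4 * (a * b) : ℝ) * hS2
      have hupos : 1 - k ^ 2 > 0 := by
        rw [hsq]; positivity
      have hkne1 : k ≠ 1 := by intro h; rw [h] at hupos; norm_num at hupos
      have hkne1' : k ≠ -1 := by intro h; rw [h] at hupos; norm_num at hupos
      have := (Real.hasDerivAt_arcsin hkne1' hkne1).comp x hinner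
      refine this.congr_deriv (Eq.symm ?_)
      rw [hsq, Real.sqrt_sq (by positivity)]
      field_simp
      linear_combination 2 * hT2
    have hcomb := (h1.add (h2.const_mul ((a + b) / 2))).sub (h3.const_mul T)
    have : HasDerivAt F ((a + b - 2 * x) / (2 * S) + (a + b) / 2 * (1 / S)
        - T * (T / (x * S))) x := hcomb
    convert this using 1
    field_simp
    linear_combination 2 * hS2 + 2 * hT2
  have hint : IntervalIntegrable (fun x => Real.sqrt ((b - x) * (x - a)) / x)
      MeasureTheory.volume a b := by
    apply ContinuousOn.intervalIntegrable
    apply ContinuousOn.div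
    · exact (Real.continuous_sqrt.comp (by continuity)).continuousOn
    · fun_prop
    · intro x hx
      rw [uIcc_of_le hab.le] at hx
      exact (lt_of_lt_of_le ha hx.1).ne'
  have := intervalIntegral.integral_eq_sub_of_hasDerivAt_of_le hab.le hcontF hderiv hint
  rw [this]
  have hFb : F b = (a + b) / 2 * (Real.pi / 2) - T * (Real.pi / 2) := by
    rw [hF]
    simp only
    have e1 : (b - b) * (b - a) = 0 := by ring
    have e2 : (2 * b - a - b) / (b - a) = 1 := by
      rw [div_eq_one_iff_eq hba.ne']; ring
    have e3 : ((a + b) * b - 2 * (a * b)) / ((b - a) * b) = 1 := by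
      rw [div_eq_one_iff_eq (by positivity)]; ring
    rw [e1, e2, e3, Real.sqrt_zero, Real.arcsin_one]
    ring
  have hFa : F a = -((a + b) / 2 * (Real.pi / 2)) + T * (Real.pi / 2) := by
    rw [hF]
    simp only
    have e1 : (b - a) * (a - a) = 0 := by ring
    have e2 : (2 * a - a - b) / (b - a) = -1 := by
      rw [div_eq_iff hba.ne']; ring
    have e3 : ((a + b) * a - 2 * (a * b)) / ((b - a) * a) = -1 := by
      rw [div_eq_iff (by positivity : (b - a) * a ≠ 0)]; ring
    rw [e1, e2, e3, Real.sqrt_zero, Real.arcsin_neg_one]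
    ring
  rw [hFb, hFa]
  ring

theorem mp_density_integrates_to_one (q : ℝ) (hq0 : 0 < q) (hq1 : q < 1) :
    ∫ l in ((1 - Real.sqrt q) ^ 2)..((1 + Real.sqrt q) ^ 2),
      Real.sqrt (((1 + Real.sqrt q) ^ 2 - l) * (l - (1 - Real.sqrt q) ^ 2)) /
        (2 * Real.pi * q * l) = 1 := by
  set s := Real.sqrt q with hs
  have hs0 : 0 < s := Real.sqrt_pos.mpr hq0
  have hs2 : s ^ 2 = q := Real.sq_sqrt hq0.le
  have hs1 : s < 1 := by nlinarith
  set a := (1 - s) ^ 2 with hadef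
  set b := (1 + s) ^ 2 with hbdef
  have ha : 0 < a := by
    have h1s : 0 < 1 - s := by linarith
    rw [hadef]; positivity
  have hab : a < b := by rw [hadef, hbdef]; nlinarith
  have hpi : (0 : ℝ) < Real.pi := Real.pi_pos
  have hcongr : ∀ l : ℝ,
      Real.sqrt ((b - l) * (l - a)) / (2 * Real.pi * q * l)
        = Real.sqrt ((b - l) * (l - a)) / l * (2 * Real.pi * q)⁻¹ := by
    intro l
    rw [div_mul_eq_div_div, div_div]
    ring_nf
  have heq : (∫ l in a..b,
      Real.sqrt ((b - l) * (l - a)) / (2 * Real.pi * q * l))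
      = (∫ l in a..b, Real.sqrt ((b - l) * (l - a)) / l) * (2 * Real.pi * q)⁻¹ := by
    rw [← intervalIntegral.integral_mul_const]
    exact intervalIntegral.integral_congr (fun l _ => hcongr l)
  rw [heq, mp_key a b ha hab]
  have hab2 : a * b = (1 - q) ^ 2 := by
    rw [hadef, hbdef]; nlinarith
  have hsab : Real.sqrt (a * b) = 1 - q := by
    rw [hab2, Real.sqrt_sq (by linarith)]
  rw [hsab]
  have habs : (a + b) / 2 = 1 + q := by rw [hadef, hbdef]; nlinarith
  rw [habs]
  field_simp
  ring
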